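/- Let (λ_n)_{n∈ℕ} be a sequence of nonzero real numbers satisfying a Weyl-type counting bound of order m. Then there is a constant C′ > 0 such that for all t with 0 < t ≤ 1, the series Σ_n |λ_n|·exp(−t·λ_n²) converges and is bounded above by C′·t^{−(m+1)/2}. -/

import Mathlib

open MeasureTheory Real Set

/-- A sequence `(λ_n)` of real numbers satisfies a Weyl-type counting bound of order `m`
if there is a constant `C > 0` such that for every `T ≥ 0` the set `{n : |λ_n| ≤ T}` is
finite with cardinality at most `C·(1+T)^m`. -/
def WeylBound (lam : ℕ → ℝ) (m : ℕ) : Prop :=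
  ∃ C > (0 : ℝ), ∀ T : ℝ, 0 ≤ T →
    {n : ℕ | |lam n| ≤ T}.Finite ∧ ({n : ℕ | |lam n| ≤ T}.ncard : ℝ) ≤ C * (1 + T) ^ m

/-- The complementary error function `erfc(x) = (2/√π) ∫_x^∞ exp(−ξ²) dξ`. -/
noncomputable def erfc (x : ℝ) : ℝ :=
  (2 / Real.sqrt π) * ∫ ξ in Ioi x, Real.exp (-ξ ^ 2)

lemma phi_summable (m : ℕ) :
    Summable (fun k : ℕ => ((k:ℝ)+1)^(m+1) * Real.exp (-(k:ℝ)^2)) := by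
  have hr : ‖Real.exp (-1)‖ < 1 := by
    rw [Real.norm_eq_abs, abs_of_pos (Real.exp_pos _)]
    exact Real.exp_lt_one_iff.mpr (by norm_num)
  have h1 : Summable (fun k : ℕ => (k:ℝ)^(m+1) * (Real.exp (-1))^k) :=
    summable_pow_mul_geometric_of_norm_lt_one (m+1) hr
  have h2 : Summable (fun k : ℕ => ((k+1:ℕ):ℝ)^(m+1) * (Real.exp (-1))^(k+1)) :=
    (summable_nat_add_iff 1).mpr h1
  have h3 := h2.mul_left (Real.exp 1)
  apply h3.of_nonneg_of_le (fun k => by positivity)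
  intro k
  have e1 : Real.exp (-(k:ℝ)^2) ≤ Real.exp (-(k:ℝ)) := by
    apply Real.exp_le_exp.mpr
    have : (k:ℝ) ≤ (k:ℝ)^2 := by
      have := Nat.le_self_pow (two_ne_zero) k
      exact_mod_cast this
    linarith
  have e2 : Real.exp 1 * (((k+1:ℕ):ℝ)^(m+1) * (Real.exp (-1))^(k+1))
      = ((k:ℝ)+1)^(m+1) * Real.exp (-(k:ℝ)) := by
    rw [← Real.exp_nat_mul]
    push_cast
    rw [mul_comm (Real.exp 1), mul_assoc, ← Real.exp_add]
    norm_num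
  rw [e2]
  exact mul_le_mul_of_nonneg_left e1 (by positivity)

/-- Small-time bound: the series `Σ |λ_n|·exp(−t·λ_n²)` converges for `0 < t ≤ 1` and is
`O(t^{−(m+1)/2})`. -/
theorem stmt_5 (m : ℕ) (hm : 0 < m) (lam : ℕ → ℝ) (hlam : ∀ n, lam n ≠ 0)
    (hW : WeylBound lam m) :
    ∃ C' > (0 : ℝ), ∀ t : ℝ, 0 < t → t ≤ 1 →
      Summable (fun n : ℕ => |lam n| * Real.exp (-(t * lam n ^ 2))) ∧
      (∑' n : ℕ, |lam n| * Real.exp (-(t * lam n ^ 2)))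
        ≤ C' * t ^ (-((m : ℝ) + 1) / 2) := by
  obtain ⟨C, hC, hN⟩ := hW
  set φ : ℕ → ℝ := fun k => ((k:ℝ)+1)^(m+1) * Real.exp (-(k:ℝ)^2) with hφdef
  have hφs : Summable φ := phi_summable m
  have hφ0 : ∀ k, 0 ≤ φ k := fun k => by positivity
  set S : ℝ := ∑' k, φ k with hSdef
  have hS1 : (1:ℝ) ≤ S := by
    have h := Summable.le_tsum hφs 0 (fun k _ => hφ0 k)
    simpa [hφdef] using h
  have hSpos : (0:ℝ) < S := lt_of_lt_of_le one_pos hS1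
  refine ⟨C * 2^m * S, by positivity, ?_⟩
  intro t ht ht1
  set s := Real.sqrt t with hsdef
  have hs : 0 < s := Real.sqrt_pos.mpr ht
  have hs1 : s ≤ 1 := by
    rw [hsdef, show (1:ℝ) = Real.sqrt 1 from (Real.sqrt_one).symm]
    exact Real.sqrt_le_sqrt ht1
  set f : ℕ → ℝ := fun n => |lam n| * Real.exp (-(t * lam n ^ 2)) with hfdef
  have hf0 : ∀ n, 0 ≤ f n := fun n => by
    simp only [hfdef]; positivity
  set g : ℕ → ℕ := fun n => ⌊s * |lam n|⌋₊ with hgdef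
  have hl1 : ∀ n, |lam n| ≤ ((g n : ℝ) + 1) / s := by
    intro n
    have hlt : s * |lam n| < (g n : ℝ) + 1 := Nat.lt_floor_add_one _
    rw [le_div_iff₀ hs]
    nlinarith [hlt]
  have hA : ∀ n, f n ≤ ((g n : ℝ) + 1) / s * Real.exp (-((g n : ℝ))^2) := by
    intro n
    have h0 : 0 ≤ s * |lam n| := by positivity
    have hfl : (g n : ℝ) ≤ s * |lam n| := Nat.floor_le h0
    have heq : (s * |lam n|)^2 = t * lam n ^ 2 := by
      rw [mul_pow, hsdef, Real.sq_sqrt ht.le, sq_abs]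
    have hexp : Real.exp (-(t * lam n ^ 2)) ≤ Real.exp (-((g n : ℝ))^2) := by
      apply Real.exp_le_exp.mpr
      have hg0 : (0:ℝ) ≤ (g n : ℝ) := Nat.cast_nonneg _
      have h2 : (g n : ℝ)^2 ≤ (s * |lam n|)^2 := by
        nlinarith [hg0, hfl]
      rw [heq] at h2
      linarith
    calc f n = |lam n| * Real.exp (-(t * lam n ^ 2)) := rfl
      _ ≤ ((g n : ℝ) + 1) / s * Real.exp (-(t * lam n ^ 2)) :=
          mul_le_mul_of_nonneg_right (hl1 n) (Real.exp_pos _).le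
      _ ≤ _ := mul_le_mul_of_nonneg_left hexp (by positivity)
  have hcard : ∀ (u : Finset ℕ) (k : ℕ),
      ((u.filter (fun n => g n = k)).card : ℝ) ≤ C * (1 + ((k:ℝ)+1)/s)^m := by
    intro u k
    have hT : (0:ℝ) ≤ ((k:ℝ)+1)/s := by positivity
    obtain ⟨hfin, hle⟩ := hN (((k:ℝ)+1)/s) hT
    refine le_trans ?_ hle
    have hsub : ↑(u.filter (fun n => g n = k)) ⊆ {n : ℕ | |lam n| ≤ ((k:ℝ)+1)/s} := by
      intro n hn
      simp only [Finset.coe_filter, Set.mem_setOf_eq] at hn ⊢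
      have := hl1 n
      rw [hn.2] at this
      exact this
    have h := Set.ncard_le_ncard hsub hfin
    rw [Set.ncard_coe_finset] at h
    exact_mod_cast h
  have hEk : ∀ k : ℕ, C * (1 + ((k:ℝ)+1)/s)^m * (((k:ℝ)+1)/s * Real.exp (-(k:ℝ)^2))
      ≤ C * 2^m / s^(m+1) * φ k := by
    intro k
    have h1 : (1:ℝ) ≤ ((k:ℝ)+1)/s := by
      rw [le_div_iff₀ hs]
      have : (0:ℝ) ≤ (k:ℝ) := Nat.cast_nonneg k
      linarith
    have h2 : (1 + ((k:ℝ)+1)/s)^m ≤ (2*(((k:ℝ)+1)/s))^m := by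
      apply pow_le_pow_left₀ (by positivity)
      linarith
    have h3 : C * (1 + ((k:ℝ)+1)/s)^m * (((k:ℝ)+1)/s * Real.exp (-(k:ℝ)^2))
        ≤ C * (2*(((k:ℝ)+1)/s))^m * (((k:ℝ)+1)/s * Real.exp (-(k:ℝ)^2)) := by
      apply mul_le_mul_of_nonneg_right _ (by positivity)
      exact mul_le_mul_of_nonneg_left h2 hC.le
    refine h3.trans (le_of_eq ?_)
    simp only [hφdef]
    rw [mul_pow, div_pow]
    field_simp
    ring
  have hsum : ∀ u : Finset ℕ, ∑ n ∈ u, f n ≤ C * 2^m / s^(m+1) * S := by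
    intro u
    set K := u.sup g with hK
    have hmap : ∀ n ∈ u, g n ∈ Finset.range (K+1) := fun n hn =>
      Finset.mem_range.mpr (Nat.lt_succ_of_le (Finset.le_sup hn))
    rw [← Finset.sum_fiberwise_of_maps_to hmap f]
    have hinner : ∀ k ∈ Finset.range (K+1),
        ∑ n ∈ u.filter (fun n => g n = k), f n ≤ C * 2^m / s^(m+1) * φ k := by
      intro k _
      have hb : ∀ n ∈ u.filter (fun n => g n = k),
          f n ≤ ((k:ℝ)+1)/s * Real.exp (-(k:ℝ)^2) := by
        intro n hn
        have hk : g n = k := (Finset.mem_filter.mp hn).2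
        have := hA n
        rw [hk] at this
        exact this
      calc ∑ n ∈ u.filter (fun n => g n = k), f n
          ≤ ∑ _n ∈ u.filter (fun n => g n = k), ((k:ℝ)+1)/s * Real.exp (-(k:ℝ)^2) :=
            Finset.sum_le_sum hb
        _ = ((u.filter (fun n => g n = k)).card : ℝ) * (((k:ℝ)+1)/s * Real.exp (-(k:ℝ)^2)) := by
            rw [Finset.sum_const, nsmul_eq_mul]
        _ ≤ C * (1 + ((k:ℝ)+1)/s)^m * (((k:ℝ)+1)/s * Real.exp (-(k:ℝ)^2)) :=
            mul_le_mul_of_nonneg_right (hcard u k) (by positivity)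
        _ ≤ C * 2^m / s^(m+1) * φ k := hEk k
    calc ∑ k ∈ Finset.range (K+1), ∑ n ∈ u.filter (fun n => g n = k), f n
        ≤ ∑ k ∈ Finset.range (K+1), C * 2^m / s^(m+1) * φ k := Finset.sum_le_sum hinner
      _ = C * 2^m / s^(m+1) * ∑ k ∈ Finset.range (K+1), φ k := by rw [← Finset.mul_sum]
      _ ≤ C * 2^m / s^(m+1) * S := by
          apply mul_le_mul_of_nonneg_left _ (by positivity)
          exact Summable.sum_le_tsum _ (fun k _ => hφ0 k) hφs
  have hpow : C * 2^m / s^(m+1) * S = C * 2^m * S * t ^ (-((m : ℝ) + 1) / 2) := by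
    have h1 : s^(m+1) = t ^ (((m:ℝ)+1)/2) := by
      rw [hsdef, Real.sqrt_eq_rpow, ← Real.rpow_natCast (t ^ ((1:ℝ)/2)) (m+1),
        ← Real.rpow_mul ht.le]
      congr 1
      push_cast
      ring
    have h2 : t ^ (-((m : ℝ) + 1) / 2) = (t ^ (((m:ℝ)+1)/2))⁻¹ := by
      rw [← Real.rpow_neg ht.le]
      congr 1
      ring
    rw [h1, h2]
    have hne : t ^ (((m:ℝ)+1)/2) ≠ 0 := by positivity
    field_simp
  have hfinal : ∀ u : Finset ℕ, ∑ n ∈ u, f n ≤ C * 2^m * S * t ^ (-((m : ℝ) + 1) / 2) := by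
    intro u
    rw [← hpow]
    exact hsum u
  constructor
  · exact summable_of_sum_range_le hf0 (fun n => hfinal (Finset.range n))
  · exact Real.tsum_le_of_sum_range_le hf0 (fun n => hfinal (Finset.range n))
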